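/- Let λ be a balanced partition with r rows and c columns, and let f be any toggle-symmetric probability distribution on the subshapes of λ. Then the expected jaggedness Σ_μ f(μ)·jag(μ), summed over all subshapes μ of λ, equals 2rc/(r+c). -/

import Mathlib

open Polynomial

/-- The set of cells of the Young diagram of the partition with parts
`lam 1 ≥ lam 2 ≥ … ≥ lam r`, i.e. pairs `(i,j)` with `1 ≤ i ≤ r` and `1 ≤ j ≤ lam i`. -/
def cells (lam : ℕ → ℕ) (r : ℕ) : Set (ℕ × ℕ) :=
  {p | 1 ≤ p.1 ∧ p.1 ≤ r ∧ 1 ≤ p.2 ∧ p.2 ≤ lam p.1}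

/-- `lam` restricted to indices `1,…,r` is a partition with `r` (positive) parts. -/
def IsPartition (lam : ℕ → ℕ) (r : ℕ) : Prop :=
  (∀ i, 1 ≤ i → i + 1 ≤ r → lam (i + 1) ≤ lam i) ∧ (∀ i, 1 ≤ i → i ≤ r → 1 ≤ lam i)

/-- A partition with `r` rows and `c = lam 1` columns is balanced if every outward corner
of its southeast boundary lies on the main anti-diagonal:
whenever `1 ≤ i < r` and `lam (i+1) < lam i`, one has `lam 1 * (r - i) = r * lam (i+1)`. -/
def IsBalanced (lam : ℕ → ℕ) (r : ℕ) : Prop :=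
  ∀ i, 1 ≤ i → i < r → lam (i + 1) < lam i → lam 1 * (r - i) = r * lam (i + 1)

/-- Flagged semistandard Young tableaux of shape `lam` (with `r` rows):
positive entries, weakly increasing along rows, strictly increasing down columns,
entries in row `i` at most `k + i`; entries outside the diagram are normalized to `0`. -/
def SYT (lam : ℕ → ℕ) (r k : ℕ) : Set ((ℕ × ℕ) → ℕ) :=
  {T | (∀ p, p ∉ cells lam r → T p = 0) ∧
       (∀ p ∈ cells lam r, 1 ≤ T p ∧ T p ≤ k + p.1) ∧
       (∀ i j, (i, j) ∈ cells lam r → (i, j + 1) ∈ cells lam r → T (i, j) ≤ T (i, j + 1)) ∧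
       (∀ i j, (i, j) ∈ cells lam r → (i + 1, j) ∈ cells lam r → T (i, j) < T (i + 1, j))}

/-- Flagged barely set-valued semistandard Young tableaux of shape `lam` (with `r` rows):
finite nonempty sets of positive integers in each cell, exactly one cell receiving a
two-element set and all other cells singletons, weakly increasing along rows
(`A ≤ B` iff every element of `A` is at most every element of `B`) and strictly
increasing down columns, every entry in row `i` at most `k + i`;
cells outside the diagram are normalized to `∅`. -/
def BSSYT (lam : ℕ → ℕ) (r k : ℕ) : Set ((ℕ × ℕ) → Finset ℕ) :=
  {T | (∀ p, p ∉ cells lam r → T p = ∅) ∧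
       (∃ B ∈ cells lam r, (T B).card = 2 ∧ ∀ p ∈ cells lam r, p ≠ B → (T p).card = 1) ∧
       (∀ p ∈ cells lam r, ∀ x ∈ T p, 1 ≤ x ∧ x ≤ k + p.1) ∧
       (∀ i j, (i, j) ∈ cells lam r → (i, j + 1) ∈ cells lam r →
          ∀ x ∈ T (i, j), ∀ y ∈ T (i, j + 1), x ≤ y) ∧
       (∀ i j, (i, j) ∈ cells lam r → (i + 1, j) ∈ cells lam r →
          ∀ x ∈ T (i, j), ∀ y ∈ T (i + 1, j), x < y)}

/-- Reverse plane partitions of shape `lam` (with `r` rows) with entries in `{0,…,k}`: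
weakly increasing along rows and down columns; entries outside the diagram normalized to `0`. -/
def RPP (lam : ℕ → ℕ) (r k : ℕ) : Set ((ℕ × ℕ) → ℕ) :=
  {P | (∀ p, p ∉ cells lam r → P p = 0) ∧
       (∀ p ∈ cells lam r, P p ≤ k) ∧
       (∀ i j, (i, j) ∈ cells lam r → (i, j + 1) ∈ cells lam r → P (i, j) ≤ P (i, j + 1)) ∧
       (∀ i j, (i, j) ∈ cells lam r → (i + 1, j) ∈ cells lam r → P (i, j) ≤ P (i + 1, j))}

/-- A subshape of `lam`: a down-closed subset of the cells of `lam`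
(i.e. a Young diagram contained in `lam`). -/
def IsSubshape (lam : ℕ → ℕ) (r : ℕ) (μ : Set (ℕ × ℕ)) : Prop :=
  μ ⊆ cells lam r ∧
  ∀ p ∈ μ, ∀ q : ℕ × ℕ, 1 ≤ q.1 → q.1 ≤ p.1 → 1 ≤ q.2 → q.2 ≤ p.2 → q ∈ μ

/-- The induced subshape `α(P,i)`: cells of `lam` whose entry in `P` is strictly less than `i`. -/
def alphaShape (lam : ℕ → ℕ) (r : ℕ) (P : (ℕ × ℕ) → ℕ) (i : ℕ) : Set (ℕ × ℕ) :=
  {p | p ∈ cells lam r ∧ P p < i}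

/-- A corner of a subshape `μ`: a cell of `μ` such that the cells immediately below
and to the right are not in `μ`. -/
def IsShapeCorner (μ : Set (ℕ × ℕ)) (p : ℕ × ℕ) : Prop :=
  p ∈ μ ∧ (p.1 + 1, p.2) ∉ μ ∧ (p.1, p.2 + 1) ∉ μ

/-- A proper outside corner of a subshape `μ` of `lam`: a cell of `lam` not in `μ` whose
upper neighbour is in `μ` (or which lies in the first row) and whose left neighbour is
in `μ` (or which lies in the first column). -/
def IsProperOutsideCorner (lam : ℕ → ℕ) (r : ℕ) (μ : Set (ℕ × ℕ)) (p : ℕ × ℕ) : Prop :=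
  p ∈ cells lam r ∧ p ∉ μ ∧
  ((p.1 - 1, p.2) ∈ μ ∨ p.1 = 1) ∧ ((p.1, p.2 - 1) ∈ μ ∨ p.2 = 1)

/-- The jaggedness of a subshape `μ` of `lam`: the number of corners of `μ` plus the
number of proper outside corners of `μ`. -/
noncomputable def jag (lam : ℕ → ℕ) (r : ℕ) (μ : Set (ℕ × ℕ)) : ℕ :=
  {p | IsShapeCorner μ p}.ncard + {p | IsProperOutsideCorner lam r μ p}.ncard

/-- `p` can be toggled into the subshape `μ`. -/
def ToggleIn (lam : ℕ → ℕ) (r : ℕ) (μ : Set (ℕ × ℕ)) (p : ℕ × ℕ) : Prop :=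
  p ∉ μ ∧ IsSubshape lam r (insert p μ)

/-- `p` can be toggled out of the subshape `μ`. -/
def ToggleOut (lam : ℕ → ℕ) (r : ℕ) (μ : Set (ℕ × ℕ)) (p : ℕ × ℕ) : Prop :=
  p ∈ μ ∧ IsSubshape lam r (μ \ {p})

/-- The `j`-th part of the rectangular staircase partition `δ_d(b^a)`,
namely `b * (d - ⌈j/a⌉)`. -/
def deltaSC (a b d : ℕ) : ℕ → ℕ := fun j => b * (d - (j + a - 1) / a)
section CHHM

open Finset in
/-- Auxiliary: the cells of `lam` as a `Finset`. -/
def cellsF (lam : ℕ → ℕ) (r : ℕ) : Finset (ℕ × ℕ) :=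
  (Finset.Icc 1 r ×ˢ Finset.Icc 1 (lam 1)).filter fun p => p.2 ≤ lam p.1

/-- Weight for toggle-in cells. -/
noncomputable def chA (r c : ℕ) (p : ℕ × ℕ) : ℝ :=
  2*(r+c) + 2*r*c - 2*c*p.1 - 2*r*p.2

/-- Weight for toggle-out cells. -/
noncomputable def chB (r c : ℕ) (p : ℕ × ℕ) : ℝ :=
  2*c*p.1 + 2*r*p.2 - 2*r*c

open Classical in
/-- Weighted count of toggleable cells. -/
noncomputable def chN (lam : ℕ → ℕ) (r : ℕ) (μ : Set (ℕ × ℕ)) : ℝ :=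
  ∑ p ∈ cellsF lam r,
    ((if IsProperOutsideCorner lam r μ p then chA r (lam 1) p else 0) +
     (if IsShapeCorner μ p then chB r (lam 1) p else 0))

lemma lam_anti {lam : ℕ → ℕ} {r : ℕ} (hpart : IsPartition lam r) :
    ∀ {i j : ℕ}, 1 ≤ i → i ≤ j → j ≤ r → lam j ≤ lam i := by
  intro i j h1 hij hjr
  induction j, hij using Nat.le_induction with
  | base => exact le_rfl
  | succ n hn ih =>
    exact le_trans (hpart.1 n (le_trans h1 hn) hjr) (ih (le_trans (Nat.le_succ n) hjr))

lemma mem_cellsF {lam : ℕ → ℕ} {r : ℕ} (hpart : IsPartition lam r) {p : ℕ × ℕ} :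
    p ∈ cellsF lam r ↔ p ∈ cells lam r := by
  simp only [cellsF, Finset.mem_filter, Finset.mem_product, Finset.mem_Icc, cells,
    Set.mem_setOf_eq]
  constructor
  · rintro ⟨⟨⟨hi1, hir⟩, ⟨hj1, _⟩⟩, hjl⟩
    exact ⟨hi1, hir, hj1, hjl⟩
  · rintro ⟨hi1, hir, hj1, hjl⟩
    exact ⟨⟨⟨hi1, hir⟩, ⟨hj1, le_trans hjl (lam_anti hpart le_rfl hi1 hir)⟩⟩, hjl⟩

lemma cells_finite {lam : ℕ → ℕ} {r : ℕ} (hpart : IsPartition lam r) :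
    (cells lam r).Finite := by
  have : cells lam r ⊆ ↑(cellsF lam r) := fun p hp => by
    simpa using (mem_cellsF hpart).2 hp
  exact Set.Finite.subset (cellsF lam r).finite_toSet this

end CHHM
section CHHM2

variable {lam : ℕ → ℕ} {r : ℕ} {μ : Set (ℕ × ℕ)}

lemma toggleOut_iff_corner (hμ : IsSubshape lam r μ) {p : ℕ × ℕ} :
    ToggleOut lam r μ p ↔ IsShapeCorner μ p := by
  obtain ⟨i, j⟩ := p
  constructor
  · rintro ⟨hp, hsub⟩
    have hi1 : 1 ≤ i := (hμ.1 hp).1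
    have hj1 : 1 ≤ j := (hμ.1 hp).2.2.1
    refine ⟨hp, fun hD => ?_, fun hR => ?_⟩
    · have : (i, j) ∈ μ \ {(i, j)} :=
        hsub.2 (i + 1, j) ⟨hD, by simp⟩ (i, j) hi1 (Nat.le_succ i) hj1 le_rfl
      simp at this
    · have : (i, j) ∈ μ \ {(i, j)} :=
        hsub.2 (i, j + 1) ⟨hR, by simp⟩ (i, j) hi1 le_rfl hj1 (Nat.le_succ j)
      simp at this
  · rintro ⟨hp, hD, hR⟩
    refine ⟨hp, fun x hx => hμ.1 hx.1, ?_⟩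
    rintro ⟨a, b⟩ ⟨hab, habne⟩ ⟨x, y⟩ hx1 hxa hy1 hyb
    replace hxa : x ≤ a := hxa
    replace hyb : y ≤ b := hyb
    refine ⟨hμ.2 (a, b) hab (x, y) hx1 hxa hy1 hyb, ?_⟩
    simp only [Set.mem_singleton_iff, Prod.mk.injEq, not_and]
    intro hxi hyj
    rcases Nat.lt_or_ge i a with h | h
    · exact hD (hμ.2 (a, b) hab (i + 1, j) (by omega) h (by omega) (by omega))
    · rcases Nat.lt_or_ge j b with h' | h'
      · exact hR (hμ.2 (a, b) hab (i, j + 1) (by omega) (by omega) (by omega) h')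
      · have : (a, b) ∈ ({(i, j)} : Set (ℕ × ℕ)) := by
          simp only [Set.mem_singleton_iff, Prod.mk.injEq]; omega
        exact habne this

lemma toggleIn_iff_poc (hμ : IsSubshape lam r μ) {p : ℕ × ℕ} :
    ToggleIn lam r μ p ↔ IsProperOutsideCorner lam r μ p := by
  obtain ⟨i, j⟩ := p
  constructor
  · rintro ⟨hp, hsub⟩
    have hcell : (i, j) ∈ cells lam r := hsub.1 (Set.mem_insert _ _)
    have hi1 : 1 ≤ i := hcell.1
    have hj1 : 1 ≤ j := hcell.2.2.1
    refine ⟨hcell, hp, ?_, ?_⟩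
    · rcases Nat.eq_or_lt_of_le hi1 with h | h
      · exact Or.inr h.symm
      · left
        have : (i - 1, j) ∈ insert (i, j) μ :=
          hsub.2 (i, j) (Set.mem_insert _ _) (i - 1, j) (by omega) (by omega) hj1 le_rfl
        rcases this with h' | h'
        · exfalso; rw [Prod.ext_iff] at h'; simp at h'; omega
        · exact h'
    · rcases Nat.eq_or_lt_of_le hj1 with h | h
      · exact Or.inr h.symm
      · left
        have : (i, j - 1) ∈ insert (i, j) μ :=
          hsub.2 (i, j) (Set.mem_insert _ _) (i, j - 1) hi1 le_rfl (by omega) (by omega)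
        rcases this with h' | h'
        · exfalso; rw [Prod.ext_iff] at h'; simp at h'; omega
        · exact h'
  · rintro ⟨hcell, hp, hu, hl⟩
    refine ⟨hp, ?_, ?_⟩
    · intro x hx
      rcases hx with hx | hx
      · rwa [hx]
      · exact hμ.1 hx
    · rintro ⟨a, b⟩ hab ⟨x, y⟩ hx1 hxa hy1 hyb
      replace hx1 : 1 ≤ x := hx1
      replace hxa : x ≤ a := hxa
      replace hy1 : 1 ≤ y := hy1
      replace hyb : y ≤ b := hyb
      simp only [Set.mem_insert_iff, Prod.mk.injEq] at hab ⊢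
      rcases hab with ⟨hai, hbj⟩ | hab
      · by_cases hxy : x = i ∧ y = j
        · exact Or.inl hxy
        · right
          rcases Nat.lt_or_ge x i with hxi | hxi
          · rcases hu with hu | hu
            · exact hμ.2 (i - 1, j) hu (x, y) hx1 (by omega) hy1 (by omega)
            · omega
          · rcases hl with hl | hl
            · exact hμ.2 (i, j - 1) hl (x, y) hx1 (by omega) hy1 (by omega)
            · omega
      · exact Or.inr (hμ.2 (a, b) hab (x, y) hx1 hxa hy1 hyb)

/-- A nonempty subshape has a removable corner. -/
lemma exists_removable (hpart : IsPartition lam r) (hμ : IsSubshape lam r μ)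
    (hne : μ.Nonempty) :
    ∃ q ∈ μ, IsSubshape lam r (μ \ {q}) := by
  have hfin : μ.Finite := ((cells_finite hpart).subset hμ.1)
  obtain ⟨q, hq, hmax0⟩ := Set.exists_max_image μ (fun p : ℕ × ℕ => p.1 + p.2) hfin hne
  have hmax : ∀ a' ∈ μ, (fun p : ℕ × ℕ => p.1 + p.2) q ≤ (fun p : ℕ × ℕ => p.1 + p.2) a' →
      (fun p : ℕ × ℕ => p.1 + p.2) q = (fun p : ℕ × ℕ => p.1 + p.2) a' :=
    fun a' ha' h => le_antisymm h (hmax0 a' ha')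
  obtain ⟨qx, qy⟩ := q
  refine ⟨(qx, qy), hq, fun x hx => hμ.1 hx.1, ?_⟩
  rintro ⟨a, b⟩ ⟨hab, habne⟩ ⟨x, y⟩ hx1 hxa hy1 hyb
  replace hxa : x ≤ a := hxa
  replace hyb : y ≤ b := hyb
  refine ⟨hμ.2 (a, b) hab (x, y) hx1 hxa hy1 hyb, ?_⟩
  simp only [Set.mem_singleton_iff, Prod.mk.injEq, not_and]
  intro hxq hyq
  have hmax' := hmax (a, b) hab
  simp only [Set.mem_singleton_iff, Prod.mk.injEq, not_and] at habne hmax'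
  replace hmax' : qx + qy ≤ a + b → qx + qy = a + b := hmax'
  omega

end CHHM2
section CHHM3

open Classical

lemma sum_five {s : Finset (ℕ × ℕ)} {F F' : ℕ × ℕ → ℝ} {q u l rr d : ℕ × ℕ}
    {dq du dl dr dd : ℝ}
    (h : ∀ p ∈ s, F' p = F p + (if p = q then dq else 0) + (if p = u then du else 0) +
      (if p = l then dl else 0) + (if p = rr then dr else 0) + (if p = d then dd else 0)) :
    ∑ p ∈ s, F' p = ∑ p ∈ s, F p + (if q ∈ s then dq else 0) + (if u ∈ s then du else 0) +
      (if l ∈ s then dl else 0) + (if rr ∈ s then dr else 0) + (if d ∈ s then dd else 0) := by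
  rw [Finset.sum_congr rfl h]
  simp [Finset.sum_add_distrib, Finset.sum_ite_eq' s]

lemma chAB_add (r c : ℕ) (p : ℕ × ℕ) : chA r c p + chB r c p = 2 * ((r : ℝ) + c) := by
  simp only [chA, chB]
  ring

end CHHM3
section CHHM4

open Classical

variable {lam : ℕ → ℕ} {r : ℕ} {μ : Set (ℕ × ℕ)}

set_option maxHeartbeats 2000000 in
lemma chN_insert (hpart : IsPartition lam r) (hbal : IsBalanced lam r)
    (hμ : IsSubshape lam r μ) {i j : ℕ} (hqμ : (i, j) ∉ μ)
    (hins : IsSubshape lam r (insert (i, j) μ)) :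
    chN lam r (insert (i, j) μ) = chN lam r μ := by
  obtain ⟨hqc, -, hU, hL⟩ := (toggleIn_iff_poc hμ).1 ⟨hqμ, hins⟩
  have hi1 : 1 ≤ i := hqc.1
  have hir : i ≤ r := hqc.2.1
  have hj1 : 1 ≤ j := hqc.2.2.1
  have hjl : j ≤ lam i := hqc.2.2.2
  have hRμ : (i, j + 1) ∉ μ := fun h => hqμ (hμ.2 _ h (i, j) hi1 le_rfl hj1 (Nat.le_succ j))
  have hDμ : (i + 1, j) ∉ μ := fun h => hqμ (hμ.2 _ h (i, j) hi1 (Nat.le_succ i) hj1 le_rfl)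
  have neqU : ((i, j) : ℕ × ℕ) ≠ (i - 1, j) := by
    simp only [ne_eq, Prod.mk.injEq]; omega
  have neqL : ((i, j) : ℕ × ℕ) ≠ (i, j - 1) := by
    simp only [ne_eq, Prod.mk.injEq]; omega
  have neqR : ((i, j) : ℕ × ℕ) ≠ (i, j + 1) := by
    simp only [ne_eq, Prod.mk.injEq]; omega
  have neqD : ((i, j) : ℕ × ℕ) ≠ (i + 1, j) := by
    simp only [ne_eq, Prod.mk.injEq]; omega
  have neUL : ((i - 1, j) : ℕ × ℕ) ≠ (i, j - 1) := by
    simp only [ne_eq, Prod.mk.injEq]; omega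
  have neUR : ((i - 1, j) : ℕ × ℕ) ≠ (i, j + 1) := by
    simp only [ne_eq, Prod.mk.injEq]; omega
  have neUD : ((i - 1, j) : ℕ × ℕ) ≠ (i + 1, j) := by
    simp only [ne_eq, Prod.mk.injEq]; omega
  have neLR : ((i, j - 1) : ℕ × ℕ) ≠ (i, j + 1) := by
    simp only [ne_eq, Prod.mk.injEq]; omega
  have neLD : ((i, j - 1) : ℕ × ℕ) ≠ (i + 1, j) := by
    simp only [ne_eq, Prod.mk.injEq]; omega
  have neRD : ((i, j + 1) : ℕ × ℕ) ≠ (i + 1, j) := by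
    simp only [ne_eq, Prod.mk.injEq]; omega
  -- the five deltas
  set dq : ℝ := chB r (lam 1) (i, j) - chA r (lam 1) (i, j) with hdq
  set du : ℝ := if 2 ≤ i ∧ (i - 1, j + 1) ∉ μ then -(chB r (lam 1) (i - 1, j)) else 0 with hdu
  set dl : ℝ := if 2 ≤ j ∧ (i + 1, j - 1) ∉ μ then -(chB r (lam 1) (i, j - 1)) else 0 with hdl
  set dr : ℝ := if (i = 1 ∨ (i - 1, j + 1) ∈ μ) ∧ (i, j + 1) ∈ cells lam r
      then chA r (lam 1) (i, j + 1) else 0 with hdr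
  set dd : ℝ := if (j = 1 ∨ (i + 1, j - 1) ∈ μ) ∧ (i + 1, j) ∈ cells lam r
      then chA r (lam 1) (i + 1, j) else 0 with hdd
  have key : ∀ p ∈ cellsF lam r,
      ((if IsProperOutsideCorner lam r (insert (i, j) μ) p then chA r (lam 1) p else 0) +
       (if IsShapeCorner (insert (i, j) μ) p then chB r (lam 1) p else 0)) =
      ((if IsProperOutsideCorner lam r μ p then chA r (lam 1) p else 0) +
       (if IsShapeCorner μ p then chB r (lam 1) p else 0)) +
      (if p = (i, j) then dq else 0) + (if p = (i - 1, j) then du else 0) +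
      (if p = (i, j - 1) then dl else 0) + (if p = (i, j + 1) then dr else 0) +
      (if p = (i + 1, j) then dd else 0) := by
    intro p hp
    have hpc : p ∈ cells lam r := (mem_cellsF hpart).1 hp
    have hp1 : 1 ≤ p.1 := hpc.1
    have hp2 : 1 ≤ p.2 := hpc.2.2.1
    by_cases hpq : p = (i, j)
    · subst hpq
      rw [if_pos rfl, if_neg neqU, if_neg neqL, if_neg neqR, if_neg neqD]
      rw [if_neg (show ¬ IsProperOutsideCorner lam r (insert (i, j) μ) (i, j) from
            fun h => h.2.1 (Set.mem_insert _ _)),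
        if_pos (show IsShapeCorner (insert (i, j) μ) (i, j) from
          ⟨Set.mem_insert _ _,
            (show (i + 1, j) ∉ insert (i, j) μ from by
              intro hmem
              rcases hmem with h | h
              · rw [Prod.mk.injEq] at h; omega
              · exact hDμ h),
            (show (i, j + 1) ∉ insert (i, j) μ from by
              intro hmem
              rcases hmem with h | h
              · rw [Prod.mk.injEq] at h; omega
              · exact hRμ h)⟩),
        if_pos (show IsProperOutsideCorner lam r μ (i, j) from ⟨hqc, hqμ, hU, hL⟩),
        if_neg (show ¬ IsShapeCorner μ (i, j) from fun h => hqμ h.1)]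
      ring
    · by_cases hpU : p = (i - 1, j)
      · subst hpU
        have hi2 : 2 ≤ i := by omega
        have hUμ : (i - 1, j) ∈ μ := by
          rcases hU with h | h
          · exact h
          · omega
        have hUq : ((i - 1) + 1, j) = ((i : ℕ), j) := by
          rw [Prod.mk.injEq]; omega
        rw [if_neg hpq, if_pos rfl, if_neg neUL, if_neg neUR, if_neg neUD]
        rw [if_neg (show ¬ IsProperOutsideCorner lam r (insert (i, j) μ) (i - 1, j) from
              fun h => h.2.1 (Set.mem_insert_of_mem _ hUμ)),
          if_neg (show ¬ IsProperOutsideCorner lam r μ (i - 1, j) from fun h => h.2.1 hUμ),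
          if_neg (show ¬ IsShapeCorner (insert (i, j) μ) (i - 1, j) from by
            intro h
            exact h.2.1 (by rw [hUq]; exact Set.mem_insert _ _))]
        by_cases hX : (i - 1, j + 1) ∈ μ
        · rw [if_neg (show ¬ IsShapeCorner μ (i - 1, j) from fun h => h.2.2 hX)]
          rw [hdu, if_neg (by tauto)]
          ring
        · rw [if_pos (show IsShapeCorner μ (i - 1, j) from
              ⟨hUμ, (show ((i - 1) + 1, j) ∉ μ from by rw [hUq]; exact hqμ), hX⟩)]
          rw [hdu, if_pos ⟨hi2, hX⟩]
          ring
      · by_cases hpL : p = (i, j - 1)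
        · subst hpL
          have hj2 : 2 ≤ j := by omega
          have hLμ : (i, j - 1) ∈ μ := by
            rcases hL with h | h
            · exact h
            · omega
          have hLq : ((i : ℕ), (j - 1) + 1) = ((i : ℕ), j) := by
            rw [Prod.mk.injEq]; omega
          rw [if_neg hpq, if_neg hpU, if_pos rfl, if_neg neLR, if_neg neLD]
          rw [if_neg (show ¬ IsProperOutsideCorner lam r (insert (i, j) μ) (i, j - 1) from
                fun h => h.2.1 (Set.mem_insert_of_mem _ hLμ)),
            if_neg (show ¬ IsProperOutsideCorner lam r μ (i, j - 1) from fun h => h.2.1 hLμ),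
            if_neg (show ¬ IsShapeCorner (insert (i, j) μ) (i, j - 1) from by
              intro h
              exact h.2.2 (by rw [hLq]; exact Set.mem_insert _ _))]
          by_cases hY : (i + 1, j - 1) ∈ μ
          · rw [if_neg (show ¬ IsShapeCorner μ (i, j - 1) from fun h => h.2.1 hY)]
            rw [hdl, if_neg (by tauto)]
            ring
          · rw [if_pos (show IsShapeCorner μ (i, j - 1) from
                ⟨hLμ, hY, (show ((i : ℕ), (j - 1) + 1) ∉ μ from by rw [hLq]; exact hqμ)⟩)]
            rw [hdl, if_pos ⟨hj2, hY⟩]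
            ring
        · by_cases hpR : p = (i, j + 1)
          · subst hpR
            have hRμ' : (i, j + 1) ∉ insert (i, j) μ := by
              intro hmem
              rcases hmem with h | h
              · rw [Prod.mk.injEq] at h; omega
              · exact hRμ h
            rw [if_neg hpq, if_neg hpU, if_neg hpL, if_pos rfl, if_neg neRD]
            rw [if_neg (show ¬ IsShapeCorner (insert (i, j) μ) (i, j + 1) from
                  fun h => hRμ' h.1),
              if_neg (show ¬ IsShapeCorner μ (i, j + 1) from fun h => hRμ h.1),
              if_neg (show ¬ IsProperOutsideCorner lam r μ (i, j + 1) from by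
                intro h
                rcases h.2.2.2 with h' | h'
                · exact hqμ h'
                · omega)]
            by_cases hup : i = 1 ∨ (i - 1, j + 1) ∈ μ
            · rw [if_pos (show IsProperOutsideCorner lam r (insert (i, j) μ) (i, j + 1) from by
                refine ⟨hpc, hRμ', ?_, Or.inl (Set.mem_insert _ _)⟩
                rcases hup with h | h
                · exact Or.inr h
                · exact Or.inl (Set.mem_insert_of_mem _ h))]
              rw [hdr, if_pos ⟨hup, hpc⟩]
              ring
            · push_neg at hup
              rw [if_neg (show ¬ IsProperOutsideCorner lam r (insert (i, j) μ) (i, j + 1) from by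
                intro h
                rcases h.2.2.1 with h' | h'
                · rcases h' with h'' | h''
                  · rw [Prod.mk.injEq] at h''; omega
                  · exact hup.2 h''
                · exact hup.1 h')]
              rw [hdr, if_neg (by tauto)]
              ring
          · by_cases hpD : p = (i + 1, j)
            · subst hpD
              have hDμ' : (i + 1, j) ∉ insert (i, j) μ := by
                intro hmem
                rcases hmem with h | h
                · rw [Prod.mk.injEq] at h; omega
                · exact hDμ h
              rw [if_neg hpq, if_neg hpU, if_neg hpL, if_neg hpR, if_pos rfl]
              rw [if_neg (show ¬ IsShapeCorner (insert (i, j) μ) (i + 1, j) from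
                    fun h => hDμ' h.1),
                if_neg (show ¬ IsShapeCorner μ (i + 1, j) from fun h => hDμ h.1),
                if_neg (show ¬ IsProperOutsideCorner lam r μ (i + 1, j) from by
                  intro h
                  rcases h.2.2.1 with h' | h'
                  · exact hqμ h'
                  · omega)]
              by_cases hdn : j = 1 ∨ (i + 1, j - 1) ∈ μ
              · rw [if_pos (show IsProperOutsideCorner lam r (insert (i, j) μ) (i + 1, j) from by
                  refine ⟨hpc, hDμ', Or.inl (Set.mem_insert _ _), ?_⟩
                  rcases hdn with h | h
                  · exact Or.inr h
                  · exact Or.inl (Set.mem_insert_of_mem _ h))]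
                rw [hdd, if_pos ⟨hdn, hpc⟩]
                ring
              · push_neg at hdn
                rw [if_neg (show ¬ IsProperOutsideCorner lam r (insert (i, j) μ) (i + 1, j) from by
                  intro h
                  rcases h.2.2.2 with h' | h'
                  · rcases h' with h'' | h''
                    · rw [Prod.mk.injEq] at h''; omega
                    · exact hdn.2 h''
                  · exact hdn.1 h')]
                rw [hdd, if_neg (by tauto)]
                ring
            · -- generic cell: all statuses unchanged
              rw [if_neg hpq, if_neg hpU, if_neg hpL, if_neg hpR, if_neg hpD]
              have m1 : (p ∈ insert (i, j) μ) ↔ (p ∈ μ) := by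
                simp only [Set.mem_insert_iff]
                exact or_iff_right hpq
              have m2 : ((p.1 - 1, p.2) ∈ insert (i, j) μ) ↔ ((p.1 - 1, p.2) ∈ μ) := by
                simp only [Set.mem_insert_iff]
                refine or_iff_right fun h => hpD ?_
                rw [Prod.mk.injEq] at h
                rw [Prod.ext_iff]
                simp only []
                omega
              have m3 : ((p.1, p.2 - 1) ∈ insert (i, j) μ) ↔ ((p.1, p.2 - 1) ∈ μ) := by
                simp only [Set.mem_insert_iff]
                refine or_iff_right fun h => hpR ?_
                rw [Prod.mk.injEq] at h
                rw [Prod.ext_iff]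
                simp only []
                omega
              have m4 : ((p.1 + 1, p.2) ∈ insert (i, j) μ) ↔ ((p.1 + 1, p.2) ∈ μ) := by
                simp only [Set.mem_insert_iff]
                refine or_iff_right fun h => hpU ?_
                rw [Prod.mk.injEq] at h
                rw [Prod.ext_iff]
                simp only []
                omega
              have m5 : ((p.1, p.2 + 1) ∈ insert (i, j) μ) ↔ ((p.1, p.2 + 1) ∈ μ) := by
                simp only [Set.mem_insert_iff]
                refine or_iff_right fun h => hpL ?_
                rw [Prod.mk.injEq] at h
                rw [Prod.ext_iff]
                simp only []
                omega
              have e1 : IsProperOutsideCorner lam r (insert (i, j) μ) p ↔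
                  IsProperOutsideCorner lam r μ p := by
                unfold IsProperOutsideCorner
                rw [m1, m2, m3]
              have e2 : IsShapeCorner (insert (i, j) μ) p ↔ IsShapeCorner μ p := by
                unfold IsShapeCorner
                rw [m1, m4, m5]
              rw [if_congr e1 rfl rfl, if_congr e2 rfl rfl]
              ring
  have hsum := sum_five (s := cellsF lam r) key
  have hqF : (i, j) ∈ cellsF lam r := (mem_cellsF hpart).2 hqc
  have hup : (if (i - 1, j) ∈ cellsF lam r then du else 0) +
      (if (i, j + 1) ∈ cellsF lam r then dr else 0)
      = 2 * (lam 1 : ℝ) - chB r (lam 1) (i, j) := by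
    by_cases hA : i = 1 ∨ (i - 1, j + 1) ∈ μ
    · have h1 : (if (i - 1, j) ∈ cellsF lam r then du else 0) = 0 := by
        by_cases hUF : (i - 1, j) ∈ cellsF lam r
        · rw [if_pos hUF, hdu, if_neg]
          rcases hA with h | h
          · rintro ⟨h2, -⟩; omega
          · tauto
        · rw [if_neg hUF]
      by_cases hRF : (i, j + 1) ∈ cellsF lam r
      · rw [h1, if_pos hRF, hdr, if_pos ⟨hA, (mem_cellsF hpart).1 hRF⟩]
        simp only [chA, chB]
        push_cast
        ring
      · rw [h1, if_neg hRF]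
        have hRc : (i, j + 1) ∉ cells lam r := fun h => hRF ((mem_cellsF hpart).2 h)
        have hjlam : j = lam i := by
          by_contra hne
          exact hRc ⟨hi1, hir, by omega, show j + 1 ≤ lam i by omega⟩
        have hjr : (j : ℝ) = lam i := by rw [hjlam]
        rcases hA with h1' | hX
        · simp only [chB]
          rw [hjr, h1']
          push_cast
          ring
        · have hXc := hμ.1 hX
          have hi2 : 2 ≤ i := by
            have := hXc.1
            omega
          have hdrop : lam ((i - 1) + 1) < lam (i - 1) := by
            have h3 : j + 1 ≤ lam (i - 1) := hXc.2.2.2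
            rw [show (i - 1) + 1 = i from by omega]
            omega
          have hb := hbal (i - 1) (by omega) (by omega) hdrop
          rw [show (i - 1) + 1 = i from by omega] at hb
          have hb' : (lam 1 : ℝ) * ((r : ℝ) - ((i : ℝ) - 1)) = (r : ℝ) * (lam i : ℝ) := by
            have hc1 := congrArg (Nat.cast : ℕ → ℝ) hb
            push_cast [Nat.cast_sub (show i - 1 ≤ r by omega),
              Nat.cast_sub (show 1 ≤ i by omega)] at hc1
            linarith
          simp only [chB]
          rw [hjr]
          push_cast
          linarith
    · push_neg at hA
      have hi2 : 2 ≤ i := by omega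
      have hUF : (i - 1, j) ∈ cellsF lam r := by
        refine (mem_cellsF hpart).2 ⟨by omega, by omega, hj1, ?_⟩
        exact le_trans hjl (lam_anti hpart (by omega) (by omega) hir)
      rw [if_pos hUF, hdu, if_pos ⟨hi2, hA.2⟩]
      have h2 : (if (i, j + 1) ∈ cellsF lam r then dr else 0) = 0 := by
        by_cases hRF : (i, j + 1) ∈ cellsF lam r
        · rw [if_pos hRF, hdr, if_neg (by tauto)]
        · rw [if_neg hRF]
      rw [h2]
      simp only [chB]
      push_cast [Nat.cast_sub (show 1 ≤ i by omega)]
      ring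
  have hdn : (if (i, j - 1) ∈ cellsF lam r then dl else 0) +
      (if (i + 1, j) ∈ cellsF lam r then dd else 0)
      = 2 * (r : ℝ) - chB r (lam 1) (i, j) := by
    by_cases hA : j = 1 ∨ (i + 1, j - 1) ∈ μ
    · have h1 : (if (i, j - 1) ∈ cellsF lam r then dl else 0) = 0 := by
        by_cases hLF : (i, j - 1) ∈ cellsF lam r
        · rw [if_pos hLF, hdl, if_neg]
          rcases hA with h | h
          · rintro ⟨h2, -⟩; omega
          · tauto
        · rw [if_neg hLF]
      by_cases hDF : (i + 1, j) ∈ cellsF lam r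
      · rw [h1, if_pos hDF, hdd, if_pos ⟨hA, (mem_cellsF hpart).1 hDF⟩]
        simp only [chA, chB]
        push_cast
        ring
      · rw [h1, if_neg hDF]
        have hDc : (i + 1, j) ∉ cells lam r := fun h => hDF ((mem_cellsF hpart).2 h)
        rcases hA with h1' | hY
        · have hi_r : i = r := by
            by_contra h
            exact hDc ⟨by omega, by omega, hj1, by
              rw [h1']
              exact hpart.2 (i + 1) (by omega) (by omega)⟩
          simp only [chB]
          rw [hi_r, h1']
          push_cast
          ring
        · have hYc := hμ.1 hY
          have hj2 : 2 ≤ j := by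
            have := hYc.2.2.1
            omega
          have hi1r : i + 1 ≤ r := hYc.2.1
          have hlam_lt : lam (i + 1) < j := by
            by_contra h
            push_neg at h
            exact hDc ⟨by omega, hi1r, hj1, h⟩
          have hYle : j - 1 ≤ lam (i + 1) := hYc.2.2.2
          have hdrop : lam (i + 1) < lam i := by omega
          have hb := hbal i hi1 (by omega) hdrop
          have hb' : (lam 1 : ℝ) * ((r : ℝ) - (i : ℝ)) = (r : ℝ) * ((j : ℝ) - 1) := by
            have hc1 := congrArg (Nat.cast : ℕ → ℝ) hb
            push_cast [Nat.cast_sub (show i ≤ r by omega)] at hc1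
            have hle : lam (i + 1) = j - 1 := by omega
            rw [hle] at hc1
            push_cast [Nat.cast_sub (show 1 ≤ j by omega)] at hc1
            linarith
          simp only [chB]
          push_cast
          linarith
    · push_neg at hA
      have hj2 : 2 ≤ j := by omega
      have hLF : (i, j - 1) ∈ cellsF lam r := by
        refine (mem_cellsF hpart).2 ⟨hi1, hir, by omega, show j - 1 ≤ lam i by omega⟩
      rw [if_pos hLF, hdl, if_pos ⟨hj2, hA.2⟩]
      have h2 : (if (i + 1, j) ∈ cellsF lam r then dd else 0) = 0 := by
        by_cases hDF : (i + 1, j) ∈ cellsF lam r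
        · rw [if_pos hDF, hdd, if_neg (by tauto)]
        · rw [if_neg hDF]
      rw [h2]
      simp only [chB]
      push_cast [Nat.cast_sub (show 1 ≤ j by omega)]
      ring
  have hABq := chAB_add r (lam 1) (i, j)
  unfold chN
  rw [hsum, if_pos hqF, hdq]
  linarith [hup, hdn]

end CHHM4
section CHHM5

open Classical

variable {lam : ℕ → ℕ} {r : ℕ}

lemma chN_empty (hpart : IsPartition lam r) :
    chN lam r (∅ : Set (ℕ × ℕ)) = 2 * (r : ℝ) * (lam 1 : ℝ) := by
  unfold chN
  have h : ∀ p ∈ cellsF lam r,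
      ((if IsProperOutsideCorner lam r (∅ : Set (ℕ × ℕ)) p then chA r (lam 1) p else 0) +
       (if IsShapeCorner (∅ : Set (ℕ × ℕ)) p then chB r (lam 1) p else 0)) =
      (if p = (1, 1) then chA r (lam 1) p else 0) := by
    intro p hp
    rw [if_neg (show ¬ IsShapeCorner (∅ : Set (ℕ × ℕ)) p from fun h => h.1)]
    by_cases hp11 : p = (1, 1)
    · subst hp11
      rw [if_pos rfl,
        if_pos (show IsProperOutsideCorner lam r (∅ : Set (ℕ × ℕ)) (1, 1) from
          ⟨(mem_cellsF hpart).1 hp, Set.notMem_empty _, Or.inr rfl, Or.inr rfl⟩)]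
      ring
    · rw [if_neg hp11,
        if_neg (show ¬ IsProperOutsideCorner lam r (∅ : Set (ℕ × ℕ)) p from by
          rintro ⟨-, -, h1, h2⟩
          rcases h1 with h1 | h1
          · exact Set.notMem_empty _ h1
          · rcases h2 with h2 | h2
            · exact Set.notMem_empty _ h2
            · exact hp11 (by rw [Prod.ext_iff]; exact ⟨h1, h2⟩))]
      ring
  rw [Finset.sum_congr rfl h, Finset.sum_ite_eq' (cellsF lam r) ((1, 1) : ℕ × ℕ)]
  by_cases h11 : ((1, 1) : ℕ × ℕ) ∈ cellsF lam r
  · rw [if_pos h11]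
    simp only [chA]
    push_cast
    ring
  · rw [if_neg h11]
    have h2 : ¬ ((1, 1) : ℕ × ℕ) ∈ cells lam r := fun h => h11 ((mem_cellsF hpart).2 h)
    have h3 : r = 0 ∨ lam 1 = 0 := by
      by_contra h
      push_neg at h
      exact h2 ⟨le_rfl, by omega, le_rfl, show (1:ℕ) ≤ lam 1 by omega⟩
    rcases h3 with h3 | h3 <;> rw [h3] <;> simp

lemma chN_subshape (hpart : IsPartition lam r) (hbal : IsBalanced lam r) :
    ∀ n (μ : Set (ℕ × ℕ)), IsSubshape lam r μ → μ.ncard = n →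
      chN lam r μ = 2 * (r : ℝ) * (lam 1 : ℝ) := by
  intro n
  induction n using Nat.strong_induction_on with
  | _ n ih =>
    intro μ hμ hn
    rcases Set.eq_empty_or_nonempty μ with rfl | hne
    · exact chN_empty hpart
    · have hfin : μ.Finite := (cells_finite hpart).subset hμ.1
      obtain ⟨q, hqμ, hsub'⟩ := exists_removable hpart hμ hne
      obtain ⟨qi, qj⟩ := q
      have hqnot : (qi, qj) ∉ μ \ {(qi, qj)} := by simp
      have hins : insert ((qi, qj) : ℕ × ℕ) (μ \ {(qi, qj)}) = μ := by
        rw [Set.insert_diff_singleton, Set.insert_eq_self.2 hqμ]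
      have hcard : (μ \ {((qi, qj) : ℕ × ℕ)}).ncard = n - 1 := by
        rw [Set.ncard_diff_singleton_of_mem hqμ, hn]
      have hpos : 0 < n := by
        rw [← hn]
        exact (Set.ncard_pos hfin).2 hne
      calc chN lam r μ = chN lam r (insert (qi, qj) (μ \ {(qi, qj)})) := by rw [hins]
        _ = chN lam r (μ \ {(qi, qj)}) :=
            chN_insert hpart hbal hsub' hqnot (by rw [hins]; exact hμ)
        _ = 2 * (r : ℝ) * (lam 1 : ℝ) := ih (n - 1) (by omega) _ hsub' hcard

lemma jag_eq_sum (hpart : IsPartition lam r) {μ : Set (ℕ × ℕ)} (hμ : IsSubshape lam r μ) :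
    (jag lam r μ : ℝ) = ∑ p ∈ cellsF lam r,
      ((if IsProperOutsideCorner lam r μ p then (1 : ℝ) else 0) +
       (if IsShapeCorner μ p then (1 : ℝ) else 0)) := by
  have h1 : {p | IsShapeCorner μ p} =
      ↑((cellsF lam r).filter (fun p => IsShapeCorner μ p)) := by
    ext p
    simp only [Set.mem_setOf_eq, Finset.coe_filter]
    exact ⟨fun h => ⟨(mem_cellsF hpart).2 (hμ.1 h.1), h⟩, fun h => h.2⟩
  have h2 : {p | IsProperOutsideCorner lam r μ p} =
      ↑((cellsF lam r).filter (fun p => IsProperOutsideCorner lam r μ p)) := by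
    ext p
    simp only [Set.mem_setOf_eq, Finset.coe_filter]
    exact ⟨fun h => ⟨(mem_cellsF hpart).2 h.1, h⟩, fun h => h.2⟩
  have hcast : ∀ P : (ℕ × ℕ) → Prop,
      ((∑ p ∈ cellsF lam r, if P p then (1 : ℕ) else 0 : ℕ) : ℝ)
        = ∑ p ∈ cellsF lam r, (if P p then (1 : ℝ) else 0) := by
    intro P
    rw [Nat.cast_sum]
    exact Finset.sum_congr rfl (fun p _ => by split <;> simp)
  rw [jag, h1, h2, Set.ncard_coe_finset, Set.ncard_coe_finset, Nat.cast_add,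
    Finset.card_filter, Finset.card_filter, hcast _, hcast _, Finset.sum_add_distrib, add_comm]

lemma key_mu (hpart : IsPartition lam r) (hbal : IsBalanced lam r) {μ : Set (ℕ × ℕ)}
    (hμ : IsSubshape lam r μ) :
    ((r : ℝ) + (lam 1 : ℝ)) * (jag lam r μ : ℝ)
      = 2 * (r : ℝ) * (lam 1 : ℝ) + ∑ p ∈ cellsF lam r,
          (chB r (lam 1) p - ((r : ℝ) + (lam 1 : ℝ))) *
          ((if IsProperOutsideCorner lam r μ p then (1 : ℝ) else 0) -
           (if IsShapeCorner μ p then (1 : ℝ) else 0)) := by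
  have hN := chN_subshape hpart hbal μ.ncard μ hμ rfl
  rw [jag_eq_sum hpart hμ, Finset.mul_sum, ← hN]
  unfold chN
  rw [← Finset.sum_add_distrib]
  apply Finset.sum_congr rfl
  intro p hp
  have hAB := chAB_add r (lam 1) p
  by_cases hin : IsProperOutsideCorner lam r μ p <;>
    by_cases hout : IsShapeCorner μ p <;>
      simp only [if_pos, if_neg, hin, hout, if_true, if_false] <;> linarith

end CHHM5

/-- Chan–Haddadan–Hopkins–Moci, Corollary 3.8: for a balanced
partition `λ` with `r` rows and `c` columns and any toggle-symmetric probability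
distribution `f` on the subshapes of `λ`, the expected jaggedness is `2rc/(r+c)`. -/
theorem expected_jaggedness_toggle_symmetric (lam : ℕ → ℕ) (r c : ℕ)
    (hpart : IsPartition lam r) (hbal : IsBalanced lam r) (hc : c = lam 1)
    (f : Set (ℕ × ℕ) → ℝ)
    (hnn : ∀ μ, 0 ≤ f μ)
    (hsupp : ∀ μ, ¬ IsSubshape lam r μ → f μ = 0)
    (hsum : ∑ᶠ μ, f μ = 1)
    (hts : ∀ p ∈ cells lam r,
      (∑ᶠ μ ∈ {μ | IsSubshape lam r μ ∧ ToggleIn lam r μ p}, f μ)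
        = ∑ᶠ μ ∈ {μ | IsSubshape lam r μ ∧ ToggleOut lam r μ p}, f μ) :
    ((r : ℝ) + c) * (∑ᶠ μ ∈ {μ | IsSubshape lam r μ}, f μ * (jag lam r μ : ℝ))
      = 2 * r * c := by
  classical
  subst hc
  have hcf : (cells lam r).Finite := cells_finite hpart
  have hS : {μ : Set (ℕ × ℕ) | IsSubshape lam r μ}.Finite :=
    (Set.Finite.finite_subsets hcf).subset (fun μ hμ => hμ.1)
  have h0 : ∑ᶠ μ ∈ {μ | IsSubshape lam r μ}, f μ * (jag lam r μ : ℝ)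
      = ∑ μ ∈ hS.toFinset, f μ * (jag lam r μ : ℝ) :=
    finsum_mem_eq_finite_toFinset_sum _ hS
  have hmemSf : ∀ μ : Set (ℕ × ℕ), μ ∈ hS.toFinset ↔ IsSubshape lam r μ := fun μ =>
    Set.Finite.mem_toFinset hS
  have hsum' : ∑ μ ∈ hS.toFinset, f μ = 1 := by
    rw [← finsum_eq_sum_of_support_subset f (s := hS.toFinset) ?_]
    · exact hsum
    · intro μ hμ
      simp only [Finset.mem_coe, hmemSf]
      by_contra h
      exact hμ (hsupp μ h)
  have hp0 : ∀ p ∈ cellsF lam r,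
      ∑ μ ∈ hS.toFinset, f μ * ((chB r (lam 1) p - ((r : ℝ) + (lam 1 : ℝ))) *
        ((if IsProperOutsideCorner lam r μ p then (1 : ℝ) else 0) -
         (if IsShapeCorner μ p then (1 : ℝ) else 0))) = 0 := by
    intro p hpF
    have hpc := (mem_cellsF hpart).1 hpF
    have hin : ∑ᶠ μ ∈ {μ | IsSubshape lam r μ ∧ ToggleIn lam r μ p}, f μ
        = ∑ μ ∈ hS.toFinset, f μ * (if IsProperOutsideCorner lam r μ p then (1 : ℝ) else 0) := by
      have hseteq : {μ | IsSubshape lam r μ ∧ ToggleIn lam r μ p}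
          = ↑(hS.toFinset.filter (fun μ => IsProperOutsideCorner lam r μ p)) := by
        ext μ
        simp only [Set.mem_setOf_eq, Finset.coe_filter, hmemSf]
        exact ⟨fun h => ⟨h.1, (toggleIn_iff_poc h.1).1 h.2⟩,
          fun h => ⟨h.1, (toggleIn_iff_poc h.1).2 h.2⟩⟩
      rw [hseteq, finsum_mem_coe_finset, Finset.sum_filter]
      apply Finset.sum_congr rfl
      intro μ hμ
      split <;> simp
    have hout : ∑ᶠ μ ∈ {μ | IsSubshape lam r μ ∧ ToggleOut lam r μ p}, f μ
        = ∑ μ ∈ hS.toFinset, f μ * (if IsShapeCorner μ p then (1 : ℝ) else 0) := by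
      have hseteq : {μ | IsSubshape lam r μ ∧ ToggleOut lam r μ p}
          = ↑(hS.toFinset.filter (fun μ => IsShapeCorner μ p)) := by
        ext μ
        simp only [Set.mem_setOf_eq, Finset.coe_filter, hmemSf]
        exact ⟨fun h => ⟨h.1, (toggleOut_iff_corner h.1).1 h.2⟩,
          fun h => ⟨h.1, (toggleOut_iff_corner h.1).2 h.2⟩⟩
      rw [hseteq, finsum_mem_coe_finset, Finset.sum_filter]
      apply Finset.sum_congr rfl
      intro μ hμ
      split <;> simp
    have hts' := hts p hpc
    rw [hin, hout] at hts'
    have hexp : ∀ μ ∈ hS.toFinset,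
        f μ * ((chB r (lam 1) p - ((r : ℝ) + (lam 1 : ℝ))) *
          ((if IsProperOutsideCorner lam r μ p then (1 : ℝ) else 0) -
           (if IsShapeCorner μ p then (1 : ℝ) else 0)))
        = (chB r (lam 1) p - ((r : ℝ) + (lam 1 : ℝ))) *
            (f μ * (if IsProperOutsideCorner lam r μ p then (1 : ℝ) else 0)
             - f μ * (if IsShapeCorner μ p then (1 : ℝ) else 0)) := by
      intro μ hμ
      ring
    rw [Finset.sum_congr rfl hexp, ← Finset.mul_sum, Finset.sum_sub_distrib, hts']
    simp
  have h1 : ∀ μ ∈ hS.toFinset,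
      ((r : ℝ) + (lam 1 : ℝ)) * (f μ * (jag lam r μ : ℝ))
        = f μ * (2 * (r : ℝ) * (lam 1 : ℝ))
          + ∑ p ∈ cellsF lam r, f μ * ((chB r (lam 1) p - ((r : ℝ) + (lam 1 : ℝ))) *
              ((if IsProperOutsideCorner lam r μ p then (1 : ℝ) else 0) -
               (if IsShapeCorner μ p then (1 : ℝ) else 0))) := by
    intro μ hμ
    have hk := key_mu hpart hbal ((hmemSf μ).1 hμ)
    calc ((r : ℝ) + (lam 1 : ℝ)) * (f μ * (jag lam r μ : ℝ))
        = f μ * (((r : ℝ) + (lam 1 : ℝ)) * (jag lam r μ : ℝ)) := by ring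
      _ = f μ * (2 * (r : ℝ) * (lam 1 : ℝ) + ∑ p ∈ cellsF lam r,
            (chB r (lam 1) p - ((r : ℝ) + (lam 1 : ℝ))) *
            ((if IsProperOutsideCorner lam r μ p then (1 : ℝ) else 0) -
             (if IsShapeCorner μ p then (1 : ℝ) else 0))) := by rw [hk]
      _ = _ := by rw [mul_add, Finset.mul_sum]
  calc ((r : ℝ) + (lam 1 : ℝ)) * (∑ᶠ μ ∈ {μ | IsSubshape lam r μ}, f μ * (jag lam r μ : ℝ))
      = ∑ μ ∈ hS.toFinset, ((r : ℝ) + (lam 1 : ℝ)) * (f μ * (jag lam r μ : ℝ)) := by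
        rw [h0, Finset.mul_sum]
    _ = ∑ μ ∈ hS.toFinset, (f μ * (2 * (r : ℝ) * (lam 1 : ℝ))
          + ∑ p ∈ cellsF lam r, f μ * ((chB r (lam 1) p - ((r : ℝ) + (lam 1 : ℝ))) *
              ((if IsProperOutsideCorner lam r μ p then (1 : ℝ) else 0) -
               (if IsShapeCorner μ p then (1 : ℝ) else 0)))) := Finset.sum_congr rfl h1
    _ = (∑ μ ∈ hS.toFinset, f μ * (2 * (r : ℝ) * (lam 1 : ℝ)))
          + ∑ μ ∈ hS.toFinset, ∑ p ∈ cellsF lam r,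
              f μ * ((chB r (lam 1) p - ((r : ℝ) + (lam 1 : ℝ))) *
              ((if IsProperOutsideCorner lam r μ p then (1 : ℝ) else 0) -
               (if IsShapeCorner μ p then (1 : ℝ) else 0))) := Finset.sum_add_distrib
    _ = 2 * (r : ℝ) * (lam 1 : ℝ) := by
        rw [Finset.sum_comm, Finset.sum_eq_zero hp0, ← Finset.sum_mul, hsum', one_mul, add_zero]
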